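/- For every integer n ≥ 1, the Li and Keiper coefficients satisfy λ^L_n = n·λ^K_n; explicitly, (1/(n−1)!)·D^n[ x ↦ x^{n−1}·Log(2ξ(x)) ](1) = (n/n!)·D^n[ z ↦ Log(2ξ(1/(1−z))) ](0), where D^n denotes the n-th iterated complex derivative and Log the principal complex logarithm (both functions are analytic near the evaluation point since 2ξ(1) = 1). -/

import Mathlib

open Complex

/-- The completed zeta function `2ξ(x) := x(x-1)·π^(-x/2)·Γ(x/2)·ζ(x)`. -/
noncomputable def twoXi (x : ℂ) : ℂ :=
  x * (x - 1) * (Real.pi : ℂ) ^ (-x / 2) * Complex.Gamma (x / 2) * riemannZeta x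

namespace Stmt15Aux

open Filter Topology Polynomial Finset FormalMultilinearSeries

lemma analyticAt_id' (x : ℂ) : AnalyticAt ℂ (fun z : ℂ => z) x := analyticAt_id

/-- The derivative of a function analytic at a point is analytic there. -/
lemma analyticAt_deriv' {f : ℂ → ℂ} {x : ℂ} (hf : AnalyticAt ℂ f x) :
    AnalyticAt ℂ (deriv f) x :=
  (AnalyticOnNhd.deriv (s := {y | AnalyticAt ℂ f y}) (fun _ hy => hy)) x hf

/-- iterated derivative of the zero function. -/
lemma iteratedDeriv_zero_fun (k : ℕ) (x : ℂ) :
    iteratedDeriv k (fun _ : ℂ => (0 : ℂ)) x = 0 := by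
  induction k generalizing x with
  | zero => simp
  | succ k ih =>
    rw [iteratedDeriv_succ']
    have : (deriv fun _ : ℂ => (0 : ℂ)) = fun _ : ℂ => (0 : ℂ) := by
      funext y; simp
    rw [this]; exact ih x

/-- Additivity of the iterated derivative for functions analytic at a point. -/
lemma iteratedDeriv_add' {x : ℂ} : ∀ (k : ℕ) (f g : ℂ → ℂ), AnalyticAt ℂ f x →
    AnalyticAt ℂ g x →
    iteratedDeriv k (fun y => f y + g y) x = iteratedDeriv k f x + iteratedDeriv k g x := by
  intro k
  induction k with
  | zero => intro f g _ _; simp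
  | succ k ih =>
    intro f g hf hg
    rw [iteratedDeriv_succ', iteratedDeriv_succ' (f := f), iteratedDeriv_succ' (f := g)]
    have hev : (deriv fun y => f y + g y) =ᶠ[𝓝 x] fun y => deriv f y + deriv g y := by
      filter_upwards [hf.eventually_analyticAt, hg.eventually_analyticAt] with y hfy hgy
      exact deriv_add hfy.differentiableAt hgy.differentiableAt
    rw [hev.iteratedDeriv_eq k]
    exact ih _ _ (analyticAt_deriv' hf) (analyticAt_deriv' hg)

/-- Iterated derivative of a finite sum of analytic functions. -/
lemma iteratedDeriv_fsum {x : ℂ} {ι : Type} (s : Finset ι) (F : ι → ℂ → ℂ) (k : ℕ)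
    (hF : ∀ i ∈ s, AnalyticAt ℂ (F i) x) :
    iteratedDeriv k (fun y => ∑ i ∈ s, F i y) x = ∑ i ∈ s, iteratedDeriv k (F i) x := by
  classical
  induction s using Finset.cons_induction with
  | empty => simpa using iteratedDeriv_zero_fun k x
  | cons a s ha ih =>
    have h1 : AnalyticAt ℂ (F a) x := hF a (Finset.mem_cons_self a s)
    have h2 : AnalyticAt ℂ (fun y => ∑ i ∈ s, F i y) x :=
      Finset.analyticAt_fun_sum s fun i hi => hF i (Finset.mem_cons_of_mem hi)
    have hfun : (fun y => ∑ i ∈ Finset.cons a s ha, F i y)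
        = fun y => F a y + ∑ i ∈ s, F i y := by
      funext y; rw [Finset.sum_cons]
    rw [hfun, iteratedDeriv_add' k _ _ h1 h2, Finset.sum_cons,
      ih (fun i hi => hF i (Finset.mem_cons_of_mem hi))]

/-- iterated derivative via power series coefficient. -/
lemma iteratedDeriv_eq_coeff {f : ℂ → ℂ} {p : FormalMultilinearSeries ℂ ℂ ℂ} {x : ℂ}
    (hp : HasFPowerSeriesAt f p x) (k : ℕ) :
    iteratedDeriv k f x = (Nat.factorial k : ℂ) * p.coeff k := by
  obtain ⟨r, hr⟩ := hp
  have h1 := hr.factorial_smul (1 : ℂ) k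
  rw [iteratedDeriv_eq_iteratedFDeriv, ← h1, nsmul_eq_mul]
  rfl

/-- iterated derivative at `0` in terms of iterated `dslope`. -/
lemma iteratedDeriv_eq_dslope {h : ℂ → ℂ} (hh : AnalyticAt ℂ h 0) (k : ℕ) :
    iteratedDeriv k h 0 = (Nat.factorial k : ℂ) * ((Function.swap dslope 0)^[k] h 0) := by
  obtain ⟨p, hp⟩ := hh
  rw [iteratedDeriv_eq_coeff hp]
  congr 1
  have h1 : (FormalMultilinearSeries.fslope^[k] p).coeff 0
      = (Function.swap dslope 0)^[k] h 0 :=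
    (hp.has_fpower_series_iterate_dslope_fslope k).coeff_zero 1
  rw [← h1, FormalMultilinearSeries.coeff_iterate_fslope, zero_add]

/-- analyticity of the iterated dslope. -/
lemma analyticAt_iterate_dslope {h : ℂ → ℂ} (hh : AnalyticAt ℂ h 0) (k : ℕ) :
    AnalyticAt ℂ ((Function.swap dslope 0)^[k] h) 0 := by
  obtain ⟨p, hp⟩ := hh
  exact (hp.has_fpower_series_iterate_dslope_fslope k).analyticAt

/-- Exact finite Taylor expansion with iterated-dslope remainder. -/
lemma dslope_expand (h : ℂ → ℂ) : ∀ (N : ℕ) (w : ℂ),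
    h w = (∑ k ∈ Finset.range (N + 1), ((Function.swap dslope 0)^[k] h 0) * w ^ k)
      + w ^ (N + 1) * ((Function.swap dslope 0)^[N + 1] h) w := by
  intro N
  induction N with
  | zero =>
    intro w
    have h0 := sub_smul_dslope h 0 w
    simp only [sub_zero, smul_eq_mul] at h0
    rw [Finset.sum_range_one]
    have hit : (Function.swap dslope 0)^[0 + 1] h = dslope h 0 := by
      rw [zero_add, Function.iterate_one]
    rw [hit]
    simp only [Function.iterate_zero, id_eq, pow_zero, pow_one, zero_add, mul_one, one_mul]
    linear_combination -h0
  | succ N ih =>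
    intro w
    have hg := sub_smul_dslope ((Function.swap dslope 0)^[N + 1] h) 0 w
    simp only [sub_zero, smul_eq_mul] at hg
    have hit : (Function.swap dslope 0)^[N + 1 + 1] h
        = dslope ((Function.swap dslope 0)^[N + 1] h) 0 := by
      rw [Function.iterate_succ_apply']
    rw [ih w, Finset.sum_range_succ _ (N + 1), hit]
    linear_combination -(w ^ (N + 1) * hg)

/-- Vanishing of low-order iterated derivatives of `(x-1)^(m+1) * u x` at `1`. -/
lemma iteratedDeriv_factor_zero : ∀ (k m : ℕ), k ≤ m → ∀ (u : ℂ → ℂ), AnalyticAt ℂ u 1 →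
    iteratedDeriv k (fun x => (x - 1) ^ (m + 1) * u x) 1 = 0 := by
  intro k
  induction k with
  | zero => intro m _ u _; simp
  | succ k ih =>
    intro m hk u hu
    obtain ⟨m', rfl⟩ : ∃ m', m = m' + 1 := ⟨m - 1, by omega⟩
    rw [iteratedDeriv_succ']
    have hev : (deriv fun x : ℂ => (x - 1) ^ (m' + 1 + 1) * u x) =ᶠ[𝓝 1]
        fun x => (x - 1) ^ (m' + 1) * (((m' : ℂ) + 2) * u x + (x - 1) * deriv u x) := by
      filter_upwards [hu.eventually_analyticAt] with y hy
      have hd : HasDerivAt (fun x : ℂ => (x - 1) ^ (m' + 1 + 1) * u x)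
          ((m' + 1 + 1 : ℕ) * (y - 1) ^ (m' + 1) * 1 * u y
            + (y - 1) ^ (m' + 1 + 1) * deriv u y) y := by
        have hd0 := (((hasDerivAt_id y).sub_const 1).fun_pow (m' + 1 + 1)).fun_mul
          hy.differentiableAt.hasDerivAt
        simpa using hd0
      rw [hd.deriv]
      push_cast
      ring
    rw [hev.iteratedDeriv_eq k]
    refine ih m' (by omega) (fun x => ((m' : ℂ) + 2) * u x + (x - 1) * deriv u x) ?_
    exact (analyticAt_const.mul hu).add
      (((analyticAt_id' 1).sub analyticAt_const).mul (analyticAt_deriv' hu))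

/-- Iterated derivatives of polynomial functions. -/
lemma iteratedDeriv_polyeval : ∀ (k : ℕ) (p : ℂ[X]),
    iteratedDeriv k (fun x => p.eval x) = fun x => (derivative^[k] p).eval x := by
  intro k
  induction k with
  | zero => intro p; simp
  | succ k ih =>
    intro p
    rw [iteratedDeriv_succ']
    have hder : (deriv fun x : ℂ => p.eval x) = fun x => p.derivative.eval x := by
      funext x; exact Polynomial.deriv (p := p)
    rw [hder, ih p.derivative]
    funext x
    rw [← Function.iterate_succ_apply derivative k p]

/-- The key identity: the `(m+1)`-st derivative at `1` of `x^m * h(1 - 1/x)`, for `h`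
analytic at `0`, equals `(m+1)! * c_(m+1)` where `c_(m+1)` is the `(m+1)`-st iterated
dslope of `h` at `0`. -/
lemma key (m : ℕ) (h : ℂ → ℂ) (hh : AnalyticAt ℂ h 0) :
    iteratedDeriv (m + 1) (fun x : ℂ => x ^ m * h (1 - 1 / x)) 1
      = (Nat.factorial (m + 1) : ℂ) * ((Function.swap dslope 0)^[m + 1] h 0) := by
  set c : ℕ → ℂ := fun k => (Function.swap dslope 0)^[k] h 0 with hcdef
  set r : ℂ → ℂ := (Function.swap dslope 0)^[m + 2] h with hrdef
  have hr : AnalyticAt ℂ r 0 := analyticAt_iterate_dslope hh (m + 2)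
  set v : ℂ → ℂ := fun x => x⁻¹ ^ 2 * r (1 - 1 / x) - c (m + 1) * x⁻¹ with hvdef
  have hinner : AnalyticAt ℂ (fun x : ℂ => 1 - 1 / x) 1 :=
    analyticAt_const.sub (analyticAt_const.div (analyticAt_id' 1) one_ne_zero)
  have hinner0 : (fun x : ℂ => 1 - 1 / x) 1 = 0 := by norm_num
  have hvA : AnalyticAt ℂ v 1 := by
    have hinv : AnalyticAt ℂ (fun x : ℂ => x⁻¹) 1 := (analyticAt_id' 1).inv one_ne_zero
    have hcomp : AnalyticAt ℂ (fun x : ℂ => r (1 - 1 / x)) 1 := by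
      have := AnalyticAt.comp (g := r) (f := fun x : ℂ => 1 - 1 / x)
        (by simpa using hr) hinner
      simpa [Function.comp_def] using this
    exact ((hinv.pow 2).mul hcomp).sub (analyticAt_const.mul hinv)
  -- pointwise identity away from 0
  have hpt : ∀ x : ℂ, x ≠ 0 →
      x ^ m * h (1 - 1 / x)
        = (∑ k ∈ Finset.range (m + 1), c k * ((x - 1) ^ k * x ^ (m - k)))
          + (c (m + 1) * (x - 1) ^ (m + 1) + (x - 1) ^ (m + 2) * v x) := by
    intro x hx
    have hw : (1 : ℂ) - 1 / x = (x - 1) / x := by field_simp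
    rw [dslope_expand h (m + 1) (1 - 1 / x), hvdef]
    simp only [← hcdef, ← hrdef]
    rw [hw, Finset.sum_range_succ _ (m + 1), mul_add, mul_add, Finset.mul_sum]
    have hsum : ∀ k ∈ Finset.range (m + 1),
        x ^ m * (c k * ((x - 1) / x) ^ k) = c k * ((x - 1) ^ k * x ^ (m - k)) := by
      intro k hk
      have hk' : k ≤ m := Nat.lt_succ_iff.mp (Finset.mem_range.mp hk)
      rw [div_pow, ← pow_sub_mul_pow x hk']
      field_simp
    rw [Finset.sum_congr rfl hsum]
    have hx1 : x ^ m * (c (m + 1) * ((x - 1) / x) ^ (m + 1))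
        + x ^ m * (((x - 1) / x) ^ (m + 1 + 1) * r ((x - 1) / x))
        = c (m + 1) * (x - 1) ^ (m + 1)
          + (x - 1) ^ (m + 2) * (x⁻¹ ^ 2 * r ((x - 1) / x) - c (m + 1) * x⁻¹) := by
      generalize r ((x - 1) / x) = R
      have e : x ^ m * x⁻¹ ^ m = 1 := by rw [← mul_pow, mul_inv_cancel₀ hx, one_pow]
      have e1 : x * x⁻¹ = 1 := mul_inv_cancel₀ hx
      rw [div_pow, div_pow]
      linear_combination (c (m + 1) * (x - 1) ^ (m + 1) * x⁻¹ + (x - 1) ^ (m + 2) * x⁻¹ ^ 2 * R) * e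
        + c (m + 1) * (x - 1) ^ (m + 1) * e1
    linear_combination hx1
  have hev : (fun x : ℂ => x ^ m * h (1 - 1 / x)) =ᶠ[𝓝 1]
      fun x => (∑ k ∈ Finset.range (m + 1), c k * ((x - 1) ^ k * x ^ (m - k)))
        + (c (m + 1) * (x - 1) ^ (m + 1) + (x - 1) ^ (m + 2) * v x) := by
    filter_upwards [eventually_ne_nhds (one_ne_zero (α := ℂ))] with x hx using hpt x hx
  rw [hev.iteratedDeriv_eq (m + 1)]
  -- analyticity of the pieces
  have hAk : ∀ k, AnalyticAt ℂ (fun x : ℂ => c k * ((x - 1) ^ k * x ^ (m - k))) 1 :=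
    fun k => analyticAt_const.mul ((((analyticAt_id' 1).sub analyticAt_const).pow k).mul
      ((analyticAt_id' 1).pow (m - k)))
  have hB : AnalyticAt ℂ (fun x : ℂ => c (m + 1) * (x - 1) ^ (m + 1)) 1 :=
    analyticAt_const.mul (((analyticAt_id' 1).sub analyticAt_const).pow (m + 1))
  have hC : AnalyticAt ℂ (fun x : ℂ => (x - 1) ^ (m + 2) * v x) 1 :=
    (((analyticAt_id' 1).sub analyticAt_const).pow (m + 2)).mul hvA
  have hBC : AnalyticAt ℂ
      (fun x : ℂ => c (m + 1) * (x - 1) ^ (m + 1) + (x - 1) ^ (m + 2) * v x) 1 := by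
    exact hB.add hC
  rw [iteratedDeriv_add' (m + 1) _ _
    (Finset.analyticAt_fun_sum _ fun k _ => hAk k) hBC]
  rw [iteratedDeriv_add' (m + 1) _ _ hB hC]
  rw [iteratedDeriv_fsum (Finset.range (m + 1)) _ (m + 1) (fun k _ => hAk k)]
  -- the polynomial terms of degree ≤ m vanish
  have hterm : ∀ k ∈ Finset.range (m + 1),
      iteratedDeriv (m + 1) (fun x : ℂ => c k * ((x - 1) ^ k * x ^ (m - k))) 1 = 0 := by
    intro k hk
    have hk' : k ≤ m := Nat.lt_succ_iff.mp (Finset.mem_range.mp hk)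
    have hfun : (fun x : ℂ => c k * ((x - 1) ^ k * x ^ (m - k)))
        = fun x : ℂ => (Polynomial.C (c k) * ((X - Polynomial.C 1) ^ k * X ^ (m - k))).eval x := by
      funext x; simp
    have hdeg : (Polynomial.C (c k) * ((X - Polynomial.C 1) ^ k * X ^ (m - k))).natDegree
        < m + 1 := by
      refine Nat.lt_succ_of_le ?_
      calc (Polynomial.C (c k) * ((X - Polynomial.C 1) ^ k * X ^ (m - k))).natDegree
          ≤ (Polynomial.C (c k)).natDegree
            + (((X - Polynomial.C 1 : ℂ[X])) ^ k * X ^ (m - k)).natDegree := natDegree_mul_le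
        _ ≤ 0 + ((((X - Polynomial.C 1 : ℂ[X])) ^ k).natDegree
            + ((X : ℂ[X]) ^ (m - k)).natDegree) := by
            gcongr
            · exact le_of_eq (natDegree_C _)
            · exact natDegree_mul_le
        _ ≤ k * ((X - Polynomial.C 1 : ℂ[X])).natDegree + (m - k) := by
            rw [zero_add, natDegree_X_pow]
            exact add_le_add_left natDegree_pow_le _
        _ ≤ m := by rw [natDegree_X_sub_C]; omega
    rw [hfun, iteratedDeriv_polyeval, Polynomial.iterate_derivative_eq_zero hdeg]
    simp
  rw [Finset.sum_congr rfl hterm]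
  -- the degree m+1 term
  have hBval : iteratedDeriv (m + 1) (fun x : ℂ => c (m + 1) * (x - 1) ^ (m + 1)) 1
      = (Nat.factorial (m + 1) : ℂ) * c (m + 1) := by
    have h1 : (fun x : ℂ => c (m + 1) * (x - 1) ^ (m + 1))
        = fun x : ℂ => (Polynomial.C (c (m + 1)) * (X - Polynomial.C 1) ^ (m + 1)).eval x := by
      funext x; simp
    rw [h1, iteratedDeriv_polyeval]
    rw [Polynomial.iterate_derivative_C_mul,
      Polynomial.iterate_derivative_X_sub_pow_self]
    simp [mul_comm]
  -- the remainder term vanishes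
  have hCval : iteratedDeriv (m + 1) (fun x : ℂ => (x - 1) ^ (m + 2) * v x) 1 = 0 :=
    iteratedDeriv_factor_zero (m + 1) (m + 1) le_rfl v hvA
  rw [hBval, hCval]
  rw [Finset.sum_const_zero]
  ring

end Stmt15Aux

open Stmt15Aux Filter Topology in
/-- For every `n ≥ 1`, `λ^L_n = n·λ^K_n`:
`(1/(n-1)!)·D^n[x ↦ x^(n-1)·Log(2ξ(x))](1) = (n/n!)·D^n[z ↦ Log(2ξ(1/(1-z)))](0)`,
where `D^n` is the `n`-th iterated complex derivative and `Log` the principal complex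
logarithm. -/
theorem stmt_15 (n : ℕ) (hn : 1 ≤ n) :
    (1 / (Nat.factorial (n - 1) : ℂ)) *
        iteratedDeriv n (fun x : ℂ => x ^ (n - 1) * Complex.log (twoXi x)) 1 =
      ((n : ℂ) / (Nat.factorial n : ℂ)) *
        iteratedDeriv n (fun z : ℂ => Complex.log (twoXi (1 / (1 - z)))) 0 := by
  obtain ⟨m, rfl⟩ : ∃ m, n = m + 1 := ⟨n - 1, by omega⟩
  simp only [Nat.add_sub_cancel]
  -- the entire completion of twoXi
  set G : ℂ → ℂ := fun x => x * (x - 1) * completedRiemannZeta₀ x + 1 with hGdef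
  have hGdiff : Differentiable ℂ G := by
    have h0 : Differentiable ℂ fun x : ℂ => x * (x - 1) * completedRiemannZeta₀ x :=
      (differentiable_id.mul (differentiable_id.sub_const 1)).mul differentiable_completedZeta₀
    exact h0.add_const 1
  have hGA : ∀ x : ℂ, AnalyticAt ℂ G x := fun x => hGdiff.analyticAt x
  have hG1 : G 1 = 1 := by simp [hGdef]
  have htwoXi1 : twoXi 1 = 0 := by simp [twoXi]
  -- twoXi agrees with G away from 0 and 1 (for re > 0)
  have htwoXi : ∀ x : ℂ, x ≠ 0 → x ≠ 1 → 0 < x.re → twoXi x = G x := by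
    intro x hx0 hx1 hxre
    have h1x : (1 : ℂ) - x ≠ 0 := fun hc => hx1 (by linear_combination -hc)
    have hGamma : Gammaℝ x ≠ 0 := Gammaℝ_ne_zero_of_re_pos hxre
    have hstep : twoXi x = x * (x - 1) * (Gammaℝ x * riemannZeta x) := by
      rw [twoXi, Gammaℝ_def]; ring
    rw [hstep, riemannZeta_def_of_ne_zero hx0, mul_div_cancel₀ _ hGamma,
      completedRiemannZeta_eq, hGdef]
    field_simp
    ring
  -- the log of twoXi agrees with log ∘ G for re > 0
  have hlog : ∀ x : ℂ, 0 < x.re → Complex.log (twoXi x) = Complex.log (G x) := by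
    intro x hxre
    by_cases hx1 : x = 1
    · rw [hx1, htwoXi1, hG1, Complex.log_zero, Complex.log_one]
    · have hx0 : x ≠ 0 := fun hc => by simp [hc] at hxre
      rw [htwoXi x hx0 hx1 hxre]
  -- the Keiper-side function
  set h : ℂ → ℂ := fun z => Complex.log (G (1 / (1 - z))) with hhdef
  have hinner : AnalyticAt ℂ (fun z : ℂ => 1 / (1 - z)) 0 :=
    analyticAt_const.div (analyticAt_const.sub (analyticAt_id' 0)) (by norm_num)
  have hinner0 : (fun z : ℂ => 1 / (1 - z)) 0 = 1 := by norm_num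
  have hGcomp : AnalyticAt ℂ (fun z : ℂ => G (1 / (1 - z))) 0 := by
    have := AnalyticAt.comp (g := G) (f := fun z : ℂ => 1 / (1 - z))
      (by simpa using hGA 1) hinner
    simpa [Function.comp_def] using this
  have hhA : AnalyticAt ℂ h 0 := by
    refine AnalyticAt.clog hGcomp ?_
    simp only [hinner0, hG1]
    exact Complex.one_mem_slitPlane
  -- replace the right-hand side function by h
  have hre_open : IsOpen {x : ℂ | 0 < x.re} := isOpen_lt continuous_const Complex.continuous_re
  have hRHS : (fun z : ℂ => Complex.log (twoXi (1 / (1 - z)))) =ᶠ[𝓝 0] h := by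
    have hmem : {x : ℂ | 0 < x.re} ∈ 𝓝 ((fun z : ℂ => 1 / (1 - z)) 0) := by
      rw [hinner0]
      exact hre_open.mem_nhds (by norm_num)
    filter_upwards [hinner.continuousAt.eventually_mem hmem] with z hz
    exact hlog _ hz
  -- replace the left-hand side function
  have hLHS : (fun x : ℂ => x ^ m * Complex.log (twoXi x)) =ᶠ[𝓝 1]
      fun x : ℂ => x ^ m * h (1 - 1 / x) := by
    have hmem : {x : ℂ | 0 < x.re} ∈ 𝓝 (1 : ℂ) := hre_open.mem_nhds (by norm_num)
    filter_upwards [hmem] with x hx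
    have hx0 : x ≠ 0 := fun hc => by simp [hc] at hx
    have harg : (1 : ℂ) / (1 - (1 - 1 / x)) = x := by
      field_simp
      ring
    have hhx : h (1 - 1 / x) = Complex.log (G x) := by rw [hhdef]; simp only []; rw [harg]
    rw [hhx, hlog x hx]
  rw [hLHS.iteratedDeriv_eq (m + 1), hRHS.iteratedDeriv_eq (m + 1)]
  rw [key m h hhA, iteratedDeriv_eq_dslope hhA (m + 1)]
  have hfac : ((Nat.factorial m : ℂ)) ≠ 0 := Nat.cast_ne_zero.mpr (Nat.factorial_ne_zero m)
  have hfac1 : ((Nat.factorial (m + 1) : ℂ)) ≠ 0 :=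
    Nat.cast_ne_zero.mpr (Nat.factorial_ne_zero (m + 1))
  have hsucc : ((Nat.factorial (m + 1) : ℂ)) = ((m : ℂ) + 1) * (Nat.factorial m : ℂ) := by
    rw [Nat.factorial_succ]; push_cast; ring
  generalize (Function.swap dslope 0)^[m + 1] h 0 = C
  have hm1 : ((m : ℂ) + 1) ≠ 0 := Nat.cast_add_one_ne_zero m
  rw [hsucc]
  field_simp
  push_cast
  ring
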